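/- The Hessian determinant of a homogeneous polynomial f vanishes identically if and only if the partial derivatives ∂f/∂x_0, ..., ∂f/∂x_N are algebraically dependent over the base field. -/

import Mathlib

open MvPolynomial Finsupp

section Aux
variable {K : Type*} [Field K]

lemma coeff_pderiv' {n : ℕ} (j : Fin n) (P : MvPolynomial (Fin n) K) (u : Fin n →₀ ℕ) :
    coeff u (pderiv j P) = (u j + 1) * coeff (u + Finsupp.single j 1) P := by
  induction P using MvPolynomial.induction_on' with
  | monomial s a =>
    rw [pderiv_monomial, coeff_monomial, coeff_monomial]
    by_cases h : s = u + Finsupp.single j 1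
    · have h1 : s - Finsupp.single j 1 = u := by simp [h]
      have h2 : s j = u j + 1 := by simp [h]
      rw [if_pos h, if_pos h1, h2]
      push_cast
      ring
    · rw [if_neg h]
      by_cases hj : s j = 0
      · have hss : s - Finsupp.single j 1 = s := by
          ext i
          rcases eq_or_ne i j with rfl | hij
          · simp [hj]
          · simp [Finsupp.single_eq_of_ne' (Ne.symm hij)]
        rw [hss]
        by_cases hsu : s = u
        · subst hsu
          simp [hj]
        · simp [hsu]
      · have : s - Finsupp.single j 1 ≠ u := by
          intro he
          apply h
          rw [← he, tsub_add_cancel_of_le]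
          rwa [Finsupp.single_le_iff, Nat.one_le_iff_ne_zero]
        simp [this]
  | add p q hp hq => simp [hp, hq, mul_add]

lemma pderiv_ne_zero_of_mem_vars [CharZero K] {n : ℕ} {j : Fin n} {P : MvPolynomial (Fin n) K}
    (h : j ∈ P.vars) : pderiv j P ≠ 0 := by
  rw [MvPolynomial.mem_vars] at h
  obtain ⟨s, hs, hjs⟩ := h
  rw [Finsupp.mem_support_iff] at hjs
  intro h0
  have hle : Finsupp.single j 1 ≤ s := by
    rwa [Finsupp.single_le_iff, Nat.one_le_iff_ne_zero]
  set u := s - Finsupp.single j 1 with hu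
  have key := coeff_pderiv' j P u
  rw [h0, hu, tsub_add_cancel_of_le hle] at key
  have hc : coeff s P ≠ 0 := Finsupp.mem_support_iff.mp hs
  simp only [coeff_zero] at key
  rcases mul_eq_zero.mp key.symm with h | h
  · exact Nat.cast_add_one_ne_zero (u j) h
  · exact hc h

lemma support_pderiv_sum_le {n : ℕ} {j : Fin n} {P : MvPolynomial (Fin n) K}
    {u : Fin n →₀ ℕ} (hu : u ∈ (pderiv j P).support) :
    (u.sum fun _ e => e) + 1 ≤ P.totalDegree := by
  rw [MvPolynomial.mem_support_iff] at hu
  rw [coeff_pderiv'] at hu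
  have h2 : coeff (u + Finsupp.single j 1) P ≠ 0 := fun h => hu (by simp [h])
  have h3 := MvPolynomial.le_totalDegree (MvPolynomial.mem_support_iff.mpr h2)
  rw [Finsupp.sum_add_index' (fun _ => rfl) (fun _ _ _ => rfl)] at h3
  simpa [Finsupp.sum_single_index] using h3

lemma totalDegree_pderiv_lt {n : ℕ} {j : Fin n} {P : MvPolynomial (Fin n) K}
    (hP : P.totalDegree ≠ 0) : (pderiv j P).totalDegree < P.totalDegree := by
  have h1 : (pderiv j P).totalDegree ≤ P.totalDegree - 1 := by
    rw [MvPolynomial.totalDegree]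
    apply Finset.sup_le
    intro u hu
    have := support_pderiv_sum_le hu
    omega
  omega

lemma pderiv_aeval_eq_sum {n : ℕ} {ι : Type*} [Fintype ι] [DecidableEq ι]
    (y : ι → MvPolynomial (Fin n) K) (P : MvPolynomial ι K) (k : Fin n) :
    pderiv k (aeval y P) = ∑ j, aeval y (pderiv j P) * pderiv k (y j) := by
  induction P using MvPolynomial.induction_on with
  | C a => simp
  | add p q hp hq =>
    simp only [map_add, add_mul, Finset.sum_add_distrib, hp, hq]
  | mul_X p q h =>
    simp only [map_mul, aeval_X, pderiv_mul, map_add]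
    rw [h]
    simp only [pderiv_X, Finset.sum_add_distrib, add_mul, map_mul]
    have h2 : ∀ x : ι, (aeval y) (Pi.single (M := fun _ => MvPolynomial ι K) x 1 q) =
        if x = q then 1 else 0 := by
      intro x
      rcases eq_or_ne x q with rfl | hx
      · simp
      · simp [Pi.single_eq_of_ne (Ne.symm hx), hx]
    simp only [h2, ite_mul, mul_ite, mul_one, mul_zero, zero_mul, one_mul,
      Finset.sum_ite_eq', Finset.mem_univ, if_true]
    congr 1
    rw [Finset.sum_mul]
    exact Finset.sum_congr rfl fun x _ => by ring

lemma exists_minimal_annihilator {R : Type*} [CommRing R] [Algebra K R] {ι : Type*}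
    (z : ι → R) (h : ¬ AlgebraicIndependent K z) :
    ∃ P : MvPolynomial ι K, P ≠ 0 ∧ aeval z P = 0 ∧
      ∀ Q : MvPolynomial ι K, Q ≠ 0 → aeval z Q = 0 → P.totalDegree ≤ Q.totalDegree := by
  rw [algebraicIndependent_iff] at h
  push_neg at h
  classical
  obtain ⟨P0, hP0, hP0ne⟩ := h
  have hex : ∃ m : ℕ, ∃ P : MvPolynomial ι K, P ≠ 0 ∧ aeval z P = 0 ∧ P.totalDegree = m :=
    ⟨P0.totalDegree, P0, hP0ne, hP0, rfl⟩
  obtain ⟨P, hne, hz, hdeg⟩ := Nat.find_spec hex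
  exact ⟨P, hne, hz, fun Q hQne hQz => by
    rw [hdeg]
    exact Nat.find_le ⟨Q, hQne, hQz, rfl⟩⟩

lemma totalDegree_ne_zero_of_annihilator {R : Type*} [CommRing R] [Nontrivial R] [Algebra K R]
    {ι : Type*} (z : ι → R) {P : MvPolynomial ι K} (hne : P ≠ 0) (hz : aeval z P = 0) :
    P.totalDegree ≠ 0 := by
  classical
  intro h0
  have hsupp : ∀ m ∈ P.support, m = 0 := fun m hm =>
    Finsupp.ext fun x => (MvPolynomial.totalDegree_eq_zero_iff ι P).mp h0 m hm x
  have hPC : P = C (coeff 0 P) := by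
    apply MvPolynomial.ext
    intro u
    rw [coeff_C]
    by_cases hu : u = 0
    · subst hu
      simp
    · have hcu : coeff u P = 0 := by
        by_contra hc
        exact hu (hsupp u (MvPolynomial.mem_support_iff.mpr hc))
      rw [hcu, if_neg (fun h => hu h.symm)]
  rw [hPC, aeval_C] at hz
  have hc0 : coeff 0 P = 0 := (algebraMap K R).injective (by simpa using hz)
  apply hne
  rw [hPC, hc0, map_zero]

lemma not_algebraicIndependent_succ (k : ℕ) (y : Fin (k + 1) → MvPolynomial (Fin k) K) :
    ¬ AlgebraicIndependent K y := by
  classical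
  intro h
  have hinj : Function.Injective (aeval y : MvPolynomial (Fin (k + 1)) K →ₐ[K] _) :=
    algebraicIndependent_iff_injective_aeval.mp h
  set d := Finset.univ.sup (fun j => (y j).totalDegree) with hd
  set e := d * (k + 1) + 1 with he
  set r := e ^ k with hr
  set M := d * ((k + 1) * r) with hM
  set A := (Fin (k + 1) → Fin (r + 1)) with hA
  set emb : A → (Fin (k + 1) →₀ ℕ) :=
    fun f => Finsupp.equivFunOnFinite.symm (fun j => (f j : ℕ)) with hemb
  have emb_inj : Function.Injective emb := by
    intro a b hab
    funext j
    have h1 : emb a j = emb b j := by rw [hab]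
    simpa [hemb, Fin.ext_iff] using h1
  have emb_le : ∀ (f : A) (j), emb f j ≤ r := by
    intro f j
    simpa [hemb] using Nat.lt_succ_iff.mp (f j).2
  have emb_sum : ∀ f : A, ((emb f).sum fun _ e => e) ≤ (k + 1) * r := by
    intro f
    rw [Finsupp.sum_fintype _ _ (fun _ => rfl)]
    calc ∑ j, emb f j ≤ ∑ _j : Fin (k + 1), r := Finset.sum_le_sum fun j _ => emb_le f j
      _ = (k + 1) * r := by simp [mul_comm]
  set W := restrictDegree (Fin k) K M with hW
  have him : ∀ f : A, aeval y (monomial (emb f) (1 : K)) ∈ W := by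
    intro f
    apply restrictTotalDegree_le_restrictDegree
    rw [mem_restrictTotalDegree, aeval_monomial, map_one, one_mul]
    refine le_trans (MvPolynomial.totalDegree_finset_prod _ _) ?_
    calc ∑ i ∈ (emb f).support, (y i ^ emb f i).totalDegree
        ≤ ∑ i ∈ (emb f).support, emb f i * d := by
          refine Finset.sum_le_sum fun i _ => ?_
          refine le_trans (MvPolynomial.totalDegree_pow _ _) ?_
          rw [hd]
          exact Nat.mul_le_mul_left _
            (Finset.le_sup (f := fun j => (y j).totalDegree) (Finset.mem_univ i))
      _ = ((emb f).sum fun _ e => e) * d := by rw [Finsupp.sum, Finset.sum_mul]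
      _ ≤ ((k + 1) * r) * d := Nat.mul_le_mul_right _ (emb_sum f)
      _ = M := by rw [hM]; ring
  have hli : LinearIndependent K (fun f : A => aeval y (monomial (emb f) (1 : K))) := by
    have hbm : LinearIndependent K
        (fun f : A => (monomial (emb f) (1 : K) : MvPolynomial (Fin (k + 1)) K)) := by
      have h1 := (basisMonomials (Fin (k + 1)) K).linearIndependent.comp emb emb_inj
      rw [coe_basisMonomials] at h1
      exact h1
    exact hbm.map' (aeval y).toLinearMap (LinearMap.ker_eq_bot.mpr hinj)
  set v' : A → W := fun f => ⟨_, him f⟩ with hv'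
  have hli' : LinearIndependent K v' :=
    LinearIndependent.of_comp W.subtype hli
  have hcard := hli'.fintype_card_le_finrank
  let eqv : {s : Fin k →₀ ℕ | ∀ i, s i ≤ M} ≃ (Fin k → Fin (M + 1)) :=
    { toFun := fun s i => ⟨s.1 i, Nat.lt_succ_of_le (s.2 i)⟩
      invFun := fun f => ⟨Finsupp.equivFunOnFinite.symm (fun i => (f i : ℕ)),
        fun i => by simpa using Nat.lt_succ_iff.mp (f i).2⟩
      left_inv := fun s => by ext i; simp
      right_inv := fun f => by ext i; simp }
  haveI : Fintype {s : Fin k →₀ ℕ | ∀ i, s i ≤ M} := Fintype.ofEquiv _ eqv.symm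
  have hrank : Module.finrank K W = Fintype.card {s : Fin k →₀ ℕ | ∀ i, s i ≤ M} :=
    Module.finrank_eq_card_basis (basisRestrictSupport K _)
  have hcard2 : Fintype.card {s : Fin k →₀ ℕ | ∀ i, s i ≤ M} = (M + 1) ^ k := by
    rw [Fintype.card_congr eqv]
    simp [Fintype.card_fun]
  have hcardA : Fintype.card A = (r + 1) ^ (k + 1) := by simp [hA, Fintype.card_fun]
  rw [hcardA, hrank, hcard2] at hcard
  have hMe : M + 1 ≤ e * (r + 1) := by
    have : e * (r + 1) = d * ((k + 1) * r) + (d * (k + 1) + r + 1) := by rw [he]; ring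
    omega
  have h2 : (M + 1) ^ k ≤ e ^ k * (r + 1) ^ k := by
    rw [← mul_pow]
    exact Nat.pow_le_pow_left hMe k
  have hx : 0 < (r + 1) ^ k := pow_pos (Nat.succ_pos r) _
  have h3 : (r + 1) ^ (k + 1) = (r + 1) ^ k * r + (r + 1) ^ k := by
    rw [pow_succ]; ring
  have h4 : e ^ k * (r + 1) ^ k = (r + 1) ^ k * r := by rw [hr]; ring
  omega


/-- If the `g j` are algebraically dependent, the Jacobian determinant vanishes. -/
lemma det_jacobian_eq_zero_of_dep [CharZero K] {n : ℕ} (g : Fin n → MvPolynomial (Fin n) K)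
    (hdep : ¬ AlgebraicIndependent K g) :
    Matrix.det (Matrix.of fun i j : Fin n => pderiv i (g j)) = 0 := by
  classical
  obtain ⟨P, hPne, hPz, hmin⟩ := exists_minimal_annihilator g hdep
  have htd : P.totalDegree ≠ 0 := totalDegree_ne_zero_of_annihilator g hPne hPz
  obtain ⟨s, hs, hsd⟩ := Finset.exists_mem_eq_sup P.support
    (MvPolynomial.support_nonempty.mpr hPne) (fun m : Fin n →₀ ℕ => m.sum fun _ e => e)
  have hsne : ∃ j, s j ≠ 0 := by
    by_contra hall
    push_neg at hall
    apply htd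
    rw [MvPolynomial.totalDegree, hsd]
    rw [Finsupp.sum]
    exact Finset.sum_eq_zero fun j _ => hall j
  obtain ⟨j0, hj0⟩ := hsne
  have hj0v : j0 ∈ P.vars :=
    (MvPolynomial.mem_vars j0).mpr ⟨s, hs, Finsupp.mem_support_iff.mpr hj0⟩
  have hpd : pderiv j0 P ≠ 0 := pderiv_ne_zero_of_mem_vars hj0v
  have hv0 : aeval g (pderiv j0 P) ≠ 0 := by
    intro h0
    exact absurd (hmin _ hpd h0) (not_le.mpr (totalDegree_pderiv_lt htd))
  set M : Matrix (Fin n) (Fin n) (MvPolynomial (Fin n) K) :=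
    Matrix.of fun i j : Fin n => pderiv i (g j) with hM
  set v : Fin n → MvPolynomial (Fin n) K := fun j => aeval g (pderiv j P) with hv
  have hMv : M.mulVec v = 0 := by
    funext k
    have hcr := pderiv_aeval_eq_sum g P k
    rw [hPz, map_zero] at hcr
    have : M.mulVec v k = ∑ j, aeval g (pderiv j P) * pderiv k (g j) := by
      rw [Matrix.mulVec, dotProduct]
      exact Finset.sum_congr rfl fun j _ => by rw [hM, hv]; exact mul_comm _ _
    rw [this, ← hcr]
    rfl
  have hadj : M.det • v = 0 := by
    have h1 : (M.adjugate * M).mulVec v = M.adjugate.mulVec (M.mulVec v) :=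
      (Matrix.mulVec_mulVec v M.adjugate M).symm
    rw [Matrix.adjugate_mul, hMv, Matrix.mulVec_zero] at h1
    rw [← h1, Matrix.smul_mulVec, Matrix.one_mulVec]
  have h2 : M.det * v j0 = 0 := congrFun hadj j0
  rcases mul_eq_zero.mp h2 with h | h
  · exact h
  · exact absurd h hv0

/-- If the Jacobian determinant vanishes, the `g j` are algebraically dependent. -/
lemma dep_of_det_jacobian_eq_zero [CharZero K] {n : ℕ} (g : Fin n → MvPolynomial (Fin n) K)
    (hdet : Matrix.det (Matrix.of fun i j : Fin n => pderiv i (g j)) = 0) :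
    ¬ AlgebraicIndependent K g := by
  classical
  intro hind
  set F := FractionRing (MvPolynomial (Fin n) K) with hF
  set φ : MvPolynomial (Fin n) K →+* F := algebraMap (MvPolynomial (Fin n) K) F with hphi
  set M : Matrix (Fin n) (Fin n) (MvPolynomial (Fin n) K) := Matrix.of fun i j : Fin n => pderiv i (g j) with hM
  set B : Matrix (Fin n) (Fin n) F := M.map φ with hB
  have hBdet : B.det = 0 := by
    have h1 : φ M.det = (φ.mapMatrix M).det := RingHom.map_det φ M
    rw [hdet, map_zero] at h1
    exact h1.symm
  have key : ∀ i : Fin n, ∃ b : Fin n → F, B.mulVec b = Pi.single i 1 := by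
    intro i
    set y : Fin (n + 1) → MvPolynomial (Fin n) K := Fin.snoc g (X i) with hy
    obtain ⟨P, hPne, hPz, hmin⟩ :=
      exists_minimal_annihilator y (not_algebraicIndependent_succ n y)
    have htd : P.totalDegree ≠ 0 := totalDegree_ne_zero_of_annihilator y hPne hPz
    have hplast : pderiv (Fin.last n) P ≠ 0 := by
      intro h0
      have hvars : Fin.last n ∉ P.vars := fun hv => pderiv_ne_zero_of_mem_vars hv h0
      have hsub : ↑P.vars ⊆ Set.range (Fin.castSucc : Fin n → Fin (n + 1)) := by
        intro a ha
        have hne : a ≠ Fin.last n := fun h => hvars (h ▸ ha)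
        exact ⟨a.castPred hne, Fin.castSucc_castPred a hne⟩
      obtain ⟨Q, hQ⟩ := MvPolynomial.exists_rename_eq_of_vars_subset_range P Fin.castSucc
        (Fin.castSucc_injective _) hsub
      have hQne : Q ≠ 0 := fun h => hPne (by rw [← hQ, h, map_zero])
      have hQz : aeval g Q = 0 := by
        have h1 : aeval y (rename Fin.castSucc Q) = aeval (y ∘ Fin.castSucc) Q :=
          aeval_rename _ _ _
        rw [hQ, hPz] at h1
        have h2 : y ∘ Fin.castSucc = g := by
          funext j
          simp [hy, Fin.snoc_castSucc]
        rw [h2] at h1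
        exact h1.symm
      exact hQne (algebraicIndependent_iff.mp hind Q hQz)
    have hc : aeval y (pderiv (Fin.last n) P) ≠ 0 := by
      intro h0
      exact absurd (hmin _ hplast h0) (not_le.mpr (totalDegree_pderiv_lt htd))
    set c : MvPolynomial (Fin n) K := aeval y (pderiv (Fin.last n) P) with hcdef
    set a : Fin n → MvPolynomial (Fin n) K := fun j => aeval y (pderiv j.castSucc P) with ha
    have hrel : ∀ k : Fin n,
        (∑ j, M k j * a j) + c * (if i = k then 1 else 0) = 0 := by
      intro k
      have hcr := pderiv_aeval_eq_sum y P k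
      rw [hPz, map_zero] at hcr
      rw [Fin.sum_univ_castSucc] at hcr
      have h2 : y (Fin.last n) = X i := Fin.snoc_last _ _
      have h3 : pderiv k (X i : MvPolynomial (Fin n) K) = if i = k then 1 else 0 := by
        rcases eq_or_ne i k with rfl | hik
        · simp
        · simp [pderiv_X_of_ne hik, hik]
      rw [h2, h3] at hcr
      have h4 : ∀ j : Fin n,
          aeval y (pderiv j.castSucc P) * pderiv k (y j.castSucc) = M k j * a j := by
        intro j
        have h5 : y j.castSucc = g j := Fin.snoc_castSucc _ _ _
        rw [h5, ha]
        have h6 : M k j = pderiv k (g j) := rfl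
        rw [h6]
        ring
      rw [Finset.sum_congr rfl fun j _ => h4 j] at hcr
      rw [← hcr]
    have hcF : φ c ≠ 0 := fun h => hc
      (IsFractionRing.injective (MvPolynomial (Fin n) K) F (by rw [h, map_zero]))
    refine ⟨fun j => -(φ (a j)) * (φ c)⁻¹, ?_⟩
    funext k
    have hrelk := congrArg φ (hrel k)
    rw [map_add, map_mul, map_sum, map_zero] at hrelk
    simp only [map_mul] at hrelk
    have hite : φ (if i = k then (1 : MvPolynomial (Fin n) K) else 0) = if i = k then (1 : F) else 0 := by
      split <;> simp
    rw [hite] at hrelk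
    have hBk : B.mulVec (fun j => -(φ (a j)) * (φ c)⁻¹) k
        = (∑ j, φ (M k j) * φ (a j)) * (-(φ c)⁻¹) := by
      rw [Matrix.mulVec, dotProduct, Finset.sum_mul]
      refine Finset.sum_congr rfl fun j _ => ?_
      rw [hB]
      show φ (M k j) * (-(φ (a j)) * (φ c)⁻¹) = φ (M k j) * φ (a j) * -(φ c)⁻¹
      ring
    rw [hBk]
    have hsum : (∑ j, φ (M k j) * φ (a j)) = -(φ c * (if i = k then 1 else 0)) := by
      linear_combination hrelk
    rw [hsum]
    rcases eq_or_ne i k with rfl | hik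
    · rw [if_pos rfl, Pi.single_apply, if_pos rfl, mul_one]
      rw [neg_mul_neg]
      exact mul_inv_cancel₀ hcF
    · rw [if_neg hik, Pi.single_apply, if_neg (Ne.symm hik), mul_zero, neg_zero, zero_mul]
  choose b hb using key
  have hsurj : Function.Surjective B.mulVec := by
    intro u
    refine ⟨∑ i, u i • b i, ?_⟩
    have h1 : B.mulVec (∑ i, u i • b i) = ∑ i, u i • B.mulVec (b i) := by
      rw [← Matrix.mulVecLin_apply, map_sum]
      exact Finset.sum_congr rfl fun i _ => by rw [map_smul, Matrix.mulVecLin_apply]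
    rw [h1]
    funext k
    simp only [Finset.sum_apply, Pi.smul_apply, hb, Pi.single_apply, smul_eq_mul,
      mul_ite, mul_one, mul_zero]
    simp
  have hunit : IsUnit B.det :=
    (Matrix.isUnit_iff_isUnit_det B).mp (Matrix.mulVec_surjective_iff_isUnit.mp hsurj)
  rw [hBdet] at hunit
  exact (not_isUnit_zero : ¬ IsUnit (0 : F)) hunit

end Aux

/-- The Hessian determinant of a homogeneous polynomial `f` vanishes identically if and
only if the partial derivatives `∂f/∂x₀, …, ∂f/∂x_N` are algebraically dependent over
the base field. -/
theorem hessian_det_eq_zero_iff_partials_algebraicallyDependent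
    {K : Type*} [Field K] [IsAlgClosed K] [CharZero K] {N d : ℕ}
    (f : MvPolynomial (Fin (N + 1)) K) (hf : f.IsHomogeneous d) (hd : 1 ≤ d) :
    Matrix.det (Matrix.of fun i j : Fin (N + 1) => pderiv i (pderiv j f)) = 0
      ↔ ¬ AlgebraicIndependent K (fun i : Fin (N + 1) => pderiv i f) := by
  constructor
  · exact fun hdet => dep_of_det_jacobian_eq_zero (fun i => pderiv i f) hdet
  · exact fun hdep => det_jacobian_eq_zero_of_dep (fun i => pderiv i f) hdep
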